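/- Let r > 0 and let Ω ⊆ W_r × ℂ^m be open with W_r × {0} ⊆ Ω, where W_r := (−2−r, 2+r)^m + i(−r,r)^m. Let α : Ω → W_r be complex analytic with α(z,0) = z and ∂_w α(z, ·)′(0) = id_{ℂ^m} for each z ∈ W_r, such that θ : Ω → W_r × W_r, (z,w) ↦ (z, α(z,w)) is a complex analytic diffeomorphism onto an open image. Then for each ε ∈ (0, r) there exists δ₀ > 0 such that W_ε × B_{δ₀}(0) ⊆ Ω and, for every open U ⊆ W_ε and δ ∈ (0, δ₀], the set θ(U × B_δ(0)) contains ⋃_{z∈U} ({z} × B_{δ/2}(z)); moreover for each z ∈ U the map w ↦ pr₂(θ^{-1}(z,w)) on B_{δ/2}(z) is Lipschitz continuous with constant 2. -/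

import Mathlib

open Set
open scoped NNReal

/-- `W_r = (−2−r, 2+r)^m + i(−r,r)^m ⊆ ℂ^m`, with `ℂ^m = Fin m → ℂ` carrying the
maximum norm. -/
def Wset (m : ℕ) (r : ℝ) : Set (Fin m → ℂ) :=
  {z | ∀ k, |(z k).re| < 2 + r ∧ |(z k).im| < r}

open Metric in
/-- Quantitative Schwarz lemma: bound on the difference quotient at `0`. -/
lemma schwarz_dslope_bound {E : Type*} [NormedAddCommGroup E] [NormedSpace ℂ E]
    {f : ℂ → E} {T M : ℝ} (hT : 0 < T)
    (hd : DifferentiableOn ℂ f (ball (0 : ℂ) T)) (h0 : f 0 = 0)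
    (hM : ∀ t ∈ ball (0 : ℂ) T, ‖f t‖ ≤ M) :
    ∀ t ∈ ball (0 : ℂ) T, ‖dslope f 0 t‖ ≤ M / T := by
  intro t ht
  refine le_of_forall_pos_le_add fun η hη => ?_
  have hmaps : Set.MapsTo f (ball (0 : ℂ) T) (ball (f 0) (M + η * T)) := by
    intro s hs
    rw [mem_ball, dist_eq_norm, h0, sub_zero]
    have h1 := hM s hs
    nlinarith
  have h2 := Complex.norm_dslope_le_div_of_mapsTo_ball hd (hmaps.mono_right ball_subset_closedBall) ht
  calc ‖dslope f 0 t‖ ≤ (M + η * T) / T := h2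
    _ = M / T + η := by field_simp

open Metric in
/-- Quantitative Schwarz lemma, linear version. -/
lemma schwarz_norm_bound {E : Type*} [NormedAddCommGroup E] [NormedSpace ℂ E]
    {f : ℂ → E} {T M : ℝ} (hT : 0 < T)
    (hd : DifferentiableOn ℂ f (ball (0 : ℂ) T)) (h0 : f 0 = 0)
    (hM : ∀ t ∈ ball (0 : ℂ) T, ‖f t‖ ≤ M) :
    ∀ t ∈ ball (0 : ℂ) T, ‖f t‖ ≤ M / T * ‖t‖ := by
  intro t ht
  have h1 := schwarz_dslope_bound hT hd h0 hM t ht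
  have h2 : f t = (t - 0) • dslope f 0 t := by
    rw [sub_smul_dslope, h0, sub_zero]
  rw [h2, norm_smul, sub_zero]
  calc ‖t‖ * ‖dslope f 0 t‖ ≤ ‖t‖ * (M / T) :=
        mul_le_mul_of_nonneg_left h1 (norm_nonneg t)
    _ = M / T * ‖t‖ := by ring

open Metric in
/-- Quantitative Schwarz lemma, quadratic version (double zero at the origin). -/
lemma schwarz_quadratic_bound {E : Type*} [NormedAddCommGroup E] [NormedSpace ℂ E]
    [CompleteSpace E] {f : ℂ → E} {T M : ℝ} (hT : 0 < T)
    (hd : DifferentiableOn ℂ f (ball (0 : ℂ) T)) (h0 : f 0 = 0)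
    (h0' : deriv f 0 = 0)
    (hM : ∀ t ∈ ball (0 : ℂ) T, ‖f t‖ ≤ M) :
    ∀ t ∈ ball (0 : ℂ) T, ‖f t‖ ≤ M / T ^ 2 * ‖t‖ ^ 2 := by
  intro t ht
  have hg : DifferentiableOn ℂ (dslope f 0) (ball (0 : ℂ) T) :=
    (Complex.differentiableOn_dslope (ball_mem_nhds _ hT)).mpr hd
  have hg0 : dslope f 0 0 = 0 := by rw [dslope_same]; exact h0'
  have hgM : ∀ s ∈ ball (0 : ℂ) T, ‖dslope f 0 s‖ ≤ M / T :=
    schwarz_dslope_bound hT hd h0 hM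
  have h2 := schwarz_norm_bound hT hg hg0 hgM t ht
  have h3 : f t = (t - 0) • dslope f 0 t := by
    rw [sub_smul_dslope, h0, sub_zero]
  rw [h3, norm_smul, sub_zero]
  calc ‖t‖ * ‖dslope f 0 t‖ ≤ ‖t‖ * (M / T / T * ‖t‖) :=
        mul_le_mul_of_nonneg_left h2 (norm_nonneg t)
    _ = M / T ^ 2 * ‖t‖ ^ 2 := by ring

/-- Lemma on local inversion of a complex analytic local addition (`final-loc`):
let `α : Ω → W_r` be complex analytic on an open `Ω ⊆ W_r × ℂ^m` containing `W_r × {0}`,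
with `α (z, 0) = z`, `∂_w α (z, ·)'(0) = id`, such that `θ : (z,w) ↦ (z, α (z,w))` has
open image and complex analytic inverse `ψ`.  Then for each `ε ∈ (0, r)` there is
`δ₀ > 0` with `W_ε × B_{δ₀}(0) ⊆ Ω` such that for every open `U ⊆ W_ε` and
`δ ∈ (0, δ₀]`, the image `θ (U × B_δ(0))` contains `⋃_{z ∈ U} {z} × B_{δ/2}(z)`, and on
each `B_{δ/2}(z)` the map `w ↦ pr₂ (θ⁻¹ (z, w))` is Lipschitz with constant `2`. -/
theorem final_loc (m : ℕ) (r : ℝ) (hr : 0 < r)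
    (Ω : Set ((Fin m → ℂ) × (Fin m → ℂ))) (hΩ : IsOpen Ω)
    (hΩW : ∀ p ∈ Ω, p.1 ∈ Wset m r)
    (hzero : ∀ z ∈ Wset m r, ((z, 0) : (Fin m → ℂ) × (Fin m → ℂ)) ∈ Ω)
    (α : (Fin m → ℂ) × (Fin m → ℂ) → (Fin m → ℂ))
    (hα : DifferentiableOn ℂ α Ω)
    (hα0 : ∀ z ∈ Wset m r, α (z, 0) = z)
    (hαW : ∀ p ∈ Ω, α p ∈ Wset m r)
    (hderiv : ∀ z ∈ Wset m r,
      HasFDerivAt (fun w => α (z, w)) (ContinuousLinearMap.id ℂ (Fin m → ℂ)) 0)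
    (hopen : IsOpen ((fun p => (p.1, α p)) '' Ω))
    (ψ : (Fin m → ℂ) × (Fin m → ℂ) → (Fin m → ℂ) × (Fin m → ℂ))
    (hψdiff : DifferentiableOn ℂ ψ ((fun p => (p.1, α p)) '' Ω))
    (hψ : ∀ p ∈ Ω, ψ (p.1, α p) = p) :
    ∀ ε ∈ Set.Ioo (0 : ℝ) r, ∃ δ₀ > (0 : ℝ),
      (∀ z ∈ Wset m ε, ∀ w : Fin m → ℂ, ‖w‖ < δ₀ →
        ((z, w) : (Fin m → ℂ) × (Fin m → ℂ)) ∈ Ω) ∧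
      ∀ U ⊆ Wset m ε, IsOpen U → ∀ δ ∈ Set.Ioc (0 : ℝ) δ₀,
        (∀ z ∈ U, ∀ w ∈ Metric.ball z (δ / 2),
          ∃ w' ∈ Metric.ball (0 : Fin m → ℂ) δ,
            ((z, w') : (Fin m → ℂ) × (Fin m → ℂ)) ∈ Ω ∧ α (z, w') = w) ∧
        ∀ z ∈ U, ∀ w₁ ∈ Metric.ball z (δ / 2), ∀ w₂ ∈ Metric.ball z (δ / 2),
          ‖(ψ (z, w₁)).2 - (ψ (z, w₂)).2‖ ≤ 2 * ‖w₁ - w₂‖ := by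
  classical
  intro ε hεmem
  obtain ⟨hε0, hεr⟩ := hεmem
  -- trivial case `m = 0`
  rcases eq_or_ne m 0 with hm | hm
  · subst hm
    have hsub : ∀ z : Fin 0 → ℂ, z ∈ Wset 0 r := fun z k => k.elim0
    refine ⟨1, one_pos, ?_, ?_⟩
    · intro z _ w _
      have hw0 : w = 0 := Subsingleton.elim _ _
      rw [hw0]; exact hzero z (hsub z)
    · intro U _ _ δ hδ
      constructor
      · intro z _ w _
        refine ⟨0, Metric.mem_ball_self hδ.1, hzero z (hsub z), ?_⟩
        exact (hα0 z (hsub z)).trans (Subsingleton.elim _ _)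
      · intro z _ w₁ _ w₂ _
        have h0 : (ψ (z, w₁)).2 - (ψ (z, w₂)).2 = 0 := Subsingleton.elim _ _
        rw [h0, norm_zero]
        positivity
  -- main case `m ≥ 1`
  haveI : Nonempty (Fin m) := ⟨⟨0, Nat.pos_of_ne_zero hm⟩⟩
  have hWsub : Wset m ε ⊆ Wset m r := fun z hz k =>
    ⟨lt_trans (hz k).1 (by linarith), lt_trans (hz k).2 hεr⟩
  -- the compact box `D`
  set D : Set (Fin m → ℂ) := {z | ∀ k, |(z k).re| ≤ 2 + ε ∧ |(z k).im| ≤ ε} with hD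
  have hDW : D ⊆ Wset m r := fun z hz k =>
    ⟨lt_of_le_of_lt (hz k).1 (by linarith), lt_of_le_of_lt (hz k).2 hεr⟩
  have hεD : Wset m ε ⊆ D := fun z hz k => ⟨(hz k).1.le, (hz k).2.le⟩
  have hDclosed : IsClosed D := by
    have hDeq : D = ⋂ k, ({z : Fin m → ℂ | |(z k).re| ≤ 2 + ε} ∩
        {z : Fin m → ℂ | |(z k).im| ≤ ε}) := by
      ext z
      simp only [hD, Set.mem_setOf_eq, Set.mem_iInter, Set.mem_inter_iff]
    rw [hDeq]
    refine isClosed_iInter fun k => IsClosed.inter ?_ ?_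
    · exact isClosed_le (continuous_abs.comp
        (Complex.continuous_re.comp (continuous_apply k))) continuous_const
    · exact isClosed_le (continuous_abs.comp
        (Complex.continuous_im.comp (continuous_apply k))) continuous_const
  have hDbdd : Bornology.IsBounded D := by
    refine (Metric.isBounded_closedBall (x := (0 : Fin m → ℂ)) (r := 2 + 2 * ε)).subset ?_
    intro z hz
    rw [Metric.mem_closedBall, dist_zero_right]
    refine (pi_norm_le_iff_of_nonneg (by linarith)).mpr fun k => ?_
    calc ‖z k‖ ≤ |(z k).re| + |(z k).im| := Complex.norm_le_abs_re_add_abs_im (z k)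
      _ ≤ (2 + ε) + ε := add_le_add (hz k).1 (hz k).2
      _ ≤ 2 + 2 * ε := by linarith
  have hDcompact : IsCompact D := Metric.isCompact_of_isClosed_isBounded hDclosed hDbdd
  have hKΩ : D ×ˢ {(0 : Fin m → ℂ)} ⊆ Ω := by
    rintro ⟨z, w⟩ ⟨hz, hw⟩
    simp only [Set.mem_singleton_iff] at hw
    subst hw
    exact hzero z (hDW hz)
  obtain ⟨R, hRpos, hRsub⟩ :=
    (hDcompact.prod isCompact_singleton).exists_thickening_subset_open hΩ hKΩ
  have hR : ∀ z ∈ D, ∀ w : Fin m → ℂ, ‖w‖ < R → (z, w) ∈ Ω := by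
    intro z hz w hw
    apply hRsub
    rw [Metric.mem_thickening_iff]
    refine ⟨(z, 0), ⟨hz, rfl⟩, ?_⟩
    have hdist : dist ((z, w) : (Fin m → ℂ) × (Fin m → ℂ)) (z, 0) = ‖w‖ := by
      rw [Prod.dist_eq, dist_self, dist_zero_right]
      exact max_eq_right (norm_nonneg w)
    rw [hdist]; exact hw
  -- constants
  set R' : ℝ := min R 1 with hR'def
  have hR'pos : 0 < R' := lt_min hRpos one_pos
  have hR'leR : R' ≤ R := min_le_left _ _
  have hR'le1 : R' ≤ 1 := min_le_right _ _
  set M : ℝ := 5 + 4 * r with hMdef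
  have hMpos : 0 < M := by positivity
  set K : ℝ := M / R' ^ 2 with hKdef
  have hKpos : 0 < K := by positivity
  set δ₀ : ℝ := min (R' / 8) (R' ^ 2 / (12 * M)) with hδ₀def
  have hδ₀pos : 0 < δ₀ := lt_min (by positivity) (by positivity)
  have hδ₀a : δ₀ ≤ R' / 8 := min_le_left _ _
  have hδ₀b : δ₀ ≤ R' ^ 2 / (12 * M) := min_le_right _ _
  -- norm bound on `W_r`
  have hWnorm : ∀ x ∈ Wset m r, ‖x‖ ≤ 2 + 2 * r := by
    intro x hx
    refine (pi_norm_le_iff_of_nonneg (by linarith)).mpr fun k => ?_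
    calc ‖x k‖ ≤ |(x k).re| + |(x k).im| := Complex.norm_le_abs_re_add_abs_im (x k)
      _ ≤ (2 + r) + r := add_le_add (hx k).1.le (hx k).2.le
      _ = 2 + 2 * r := by ring
  -- quadratic bound on `q (z, w) = α (z, w) - z - w`
  have hQ : ∀ z ∈ Wset m ε, ∀ w : Fin m → ℂ, ‖w‖ < R' →
      ‖α (z, w) - z - w‖ ≤ K * ‖w‖ ^ 2 := by
    intro z hz w hw
    have hzr : z ∈ Wset m r := hWsub hz
    rcases eq_or_ne w 0 with hw0 | hw0
    · subst hw0
      simp [hα0 z hzr]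
    · have hwpos : 0 < ‖w‖ := norm_pos_iff.mpr hw0
      set T : ℝ := R' / ‖w‖ with hTdef
      have hTpos : 0 < T := by positivity
      set f : ℂ → (Fin m → ℂ) := fun t => α (z, t • w) - z - t • w with hfdef
      have hmem : ∀ t ∈ Metric.ball (0 : ℂ) T, (z, t • w) ∈ Ω := by
        intro t ht
        apply hR z (hεD hz)
        rw [norm_smul]
        have ht' : ‖t‖ < T := by simpa using ht
        calc ‖t‖ * ‖w‖ < T * ‖w‖ := by gcongr
          _ = R' := by rw [hTdef]; exact div_mul_cancel₀ R' (ne_of_gt hwpos)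
          _ ≤ R := hR'leR
      have hdiff : DifferentiableOn ℂ f (Metric.ball (0 : ℂ) T) := by
        have hinner : Differentiable ℂ (fun t : ℂ => ((z, t • w) :
            (Fin m → ℂ) × (Fin m → ℂ))) :=
          (differentiable_const z).prodMk (differentiable_id.smul_const w)
        exact ((hα.comp hinner.differentiableOn hmem).sub
          (differentiable_const z).differentiableOn).sub
          (differentiable_id.smul_const w).differentiableOn
      have h0 : f 0 = 0 := by simp [hfdef, hα0 z hzr]
      have hderiv0 : deriv f 0 = 0 := by
        have h1 : HasDerivAt (fun t : ℂ => t • w) w 0 := by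
          simpa using (hasDerivAt_id (0 : ℂ)).smul_const w
        have h2 : HasDerivAt (fun t : ℂ => α (z, t • w)) w 0 := by
          have hf' : HasFDerivAt (fun w => α (z, w))
              (ContinuousLinearMap.id ℂ (Fin m → ℂ)) ((0 : ℂ) • w) := by
            rw [zero_smul]; exact hderiv z hzr
          have h3 := hf'.comp_hasDerivAt (0 : ℂ) h1
          exact h3
        have h4 : HasDerivAt f 0 0 := by
          have h5 := (h2.sub_const z).sub h1
          rw [sub_self] at h5
          exact h5
        exact h4.deriv
      have hbound : ∀ t ∈ Metric.ball (0 : ℂ) T, ‖f t‖ ≤ M := by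
        intro t ht
        have hmem' := hmem t ht
        have h5 : ‖α (z, t • w)‖ ≤ 2 + 2 * r := hWnorm _ (hαW _ hmem')
        have h6 : ‖z‖ ≤ 2 + 2 * r := hWnorm z hzr
        have h7 : ‖t • w‖ ≤ 1 := by
          rw [norm_smul]
          have ht' : ‖t‖ < T := by simpa using ht
          have : ‖t‖ * ‖w‖ < R' := by
            calc ‖t‖ * ‖w‖ < T * ‖w‖ := by gcongr
              _ = R' := by rw [hTdef]; exact div_mul_cancel₀ R' (ne_of_gt hwpos)
          linarith [hR'le1]
        calc ‖f t‖ ≤ ‖α (z, t • w) - z‖ + ‖t • w‖ := norm_sub_le _ _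
          _ ≤ (‖α (z, t • w)‖ + ‖z‖) + ‖t • w‖ := by gcongr; exact norm_sub_le _ _
          _ ≤ ((2 + 2 * r) + (2 + 2 * r)) + 1 := by gcongr
          _ = M := by rw [hMdef]; ring
      have hone : (1 : ℂ) ∈ Metric.ball (0 : ℂ) T := by
        rw [Metric.mem_ball, dist_zero_right, norm_one]
        rw [hTdef, lt_div_iff₀ hwpos, one_mul]
        exact hw
      have hmain := schwarz_quadratic_bound hTpos hdiff h0 hderiv0 hbound 1 hone
      have hf1 : f 1 = α (z, w) - z - w := by simp [hfdef]
      rw [hf1] at hmain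
      calc ‖α (z, w) - z - w‖ ≤ M / T ^ 2 * ‖(1 : ℂ)‖ ^ 2 := hmain
        _ = K * ‖w‖ ^ 2 := by
            rw [norm_one, one_pow, mul_one, hTdef, hKdef]
            field_simp
  -- the key approximation property
  have hApprox : ∀ z ∈ Wset m ε,
      ApproximatesLinearOn (fun w => α (z, w)) (ContinuousLinearMap.id ℂ (Fin m → ℂ))
        (Metric.ball (0 : Fin m → ℂ) δ₀) (1 / 2) := by
    intro z hz x hx y hy
    simp only [ContinuousLinearMap.id_apply]
    have hx' : ‖x‖ < δ₀ := by simpa using hx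
    have hy' : ‖y‖ < δ₀ := by simpa using hy
    rcases eq_or_ne x y with hxy | hxy
    · subst hxy; simp
    · set d : ℝ := ‖x - y‖ with hddef
      have hdpos : 0 < d := by
        rw [hddef, norm_pos_iff]; exact sub_ne_zero.mpr hxy
      have hd2 : d < 2 * δ₀ := by
        calc d ≤ ‖x‖ + ‖y‖ := norm_sub_le _ _
          _ < 2 * δ₀ := by linarith
      set T' : ℝ := 3 * δ₀ / d with hT'def
      have hT'pos : 0 < T' := by positivity
      set G : ℂ → (Fin m → ℂ) := fun t => α (z, y + t • (x - y)) - α (z, y) - t • (x - y)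
        with hGdef
      have hptnorm : ∀ t ∈ Metric.ball (0 : ℂ) T', ‖y + t • (x - y)‖ < 4 * δ₀ := by
        intro t ht
        have ht' : ‖t‖ < T' := by simpa using ht
        have h8 : ‖t‖ * d < 3 * δ₀ := by
          rw [hT'def, lt_div_iff₀ hdpos] at ht'
          linarith
        calc ‖y + t • (x - y)‖ ≤ ‖y‖ + ‖t • (x - y)‖ := norm_add_le _ _
          _ = ‖y‖ + ‖t‖ * d := by rw [norm_smul, hddef]
          _ < δ₀ + 3 * δ₀ := by gcongr? <;> linarith
          _ = 4 * δ₀ := by ring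
      have h4δ₀ : 4 * δ₀ < R' := by
        have : 8 * δ₀ ≤ R' := by linarith [hδ₀a]
        linarith
      have hmem : ∀ t ∈ Metric.ball (0 : ℂ) T', (z, y + t • (x - y)) ∈ Ω := by
        intro t ht
        apply hR z (hεD hz)
        calc ‖y + t • (x - y)‖ < 4 * δ₀ := hptnorm t ht
          _ < R' := h4δ₀
          _ ≤ R := hR'leR
      have hdiff : DifferentiableOn ℂ G (Metric.ball (0 : ℂ) T') := by
        have hinner : Differentiable ℂ (fun t : ℂ => ((z, y + t • (x - y)) :
            (Fin m → ℂ) × (Fin m → ℂ))) :=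
          (differentiable_const z).prodMk
            ((differentiable_const y).add (differentiable_id.smul_const (x - y)))
        exact ((hα.comp hinner.differentiableOn hmem).sub
          (differentiable_const (α (z, y))).differentiableOn).sub
          (differentiable_id.smul_const (x - y)).differentiableOn
      have hG0 : G 0 = 0 := by simp [hGdef]
      have hGbound : ∀ t ∈ Metric.ball (0 : ℂ) T', ‖G t‖ ≤ 17 * K * δ₀ ^ 2 := by
        intro t ht
        have hpt : ‖y + t • (x - y)‖ < 4 * δ₀ := hptnorm t ht
        have hpt' : ‖y + t • (x - y)‖ < R' := lt_trans hpt h4δ₀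
        have hq1 := hQ z hz (y + t • (x - y)) hpt'
        have hq2 := hQ z hz y (by
          calc ‖y‖ < δ₀ := hy'
            _ ≤ R' / 8 := hδ₀a
            _ < R' := by linarith)
        have hGeq : G t = (α (z, y + t • (x - y)) - z - (y + t • (x - y))) -
            (α (z, y) - z - y) := by
          simp only [hGdef]; abel
        rw [hGeq]
        calc ‖(α (z, y + t • (x - y)) - z - (y + t • (x - y))) - (α (z, y) - z - y)‖
            ≤ ‖α (z, y + t • (x - y)) - z - (y + t • (x - y))‖ + ‖α (z, y) - z - y‖ :=
              norm_sub_le _ _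
          _ ≤ K * ‖y + t • (x - y)‖ ^ 2 + K * ‖y‖ ^ 2 := add_le_add hq1 hq2
          _ ≤ K * (4 * δ₀) ^ 2 + K * δ₀ ^ 2 := by
              gcongr <;> first
                | exact hpt.le
                | exact hy'.le
          _ = 17 * K * δ₀ ^ 2 := by ring
      have hone : (1 : ℂ) ∈ Metric.ball (0 : ℂ) T' := by
        rw [Metric.mem_ball, dist_zero_right, norm_one, hT'def, lt_div_iff₀ hdpos, one_mul]
        linarith
      have hmain := schwarz_norm_bound hT'pos hdiff hG0 hGbound 1 hone
      have hG1 : G 1 = α (z, x) - α (z, y) - (x - y) := by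
        rw [hGdef]
        simp only [one_smul]
        rw [add_sub_cancel]
      rw [hG1, norm_one, mul_one] at hmain
      have hKδ₀ : K * δ₀ ≤ 1 / 12 := by
        rw [hKdef]
        have h9 : M / R' ^ 2 * δ₀ ≤ M / R' ^ 2 * (R' ^ 2 / (12 * M)) := by gcongr
        calc M / R' ^ 2 * δ₀ ≤ M / R' ^ 2 * (R' ^ 2 / (12 * M)) := h9
          _ = 1 / 12 := by field_simp
      calc ‖α (z, x) - α (z, y) - (x - y)‖ ≤ 17 * K * δ₀ ^ 2 / T' := hmain
        _ = (17 / 3) * (K * δ₀) * d := by rw [hT'def]; field_simp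
        _ ≤ (17 / 3) * (1 / 12) * d := by gcongr
        _ ≤ (1 / 2) * d := by linarith
        _ = ((1 / 2 : ℝ≥0) : ℝ) * ‖x - y‖ := by rw [hddef]; norm_num
  -- identity as a continuous linear equivalence
  set e : (Fin m → ℂ) ≃L[ℂ] (Fin m → ℂ) := ContinuousLinearEquiv.refl ℂ (Fin m → ℂ) with hedef
  have hecoe : (e : (Fin m → ℂ) →L[ℂ] (Fin m → ℂ)) = ContinuousLinearMap.id ℂ (Fin m → ℂ) := by
    rw [hedef]; rfl
  have hesymm : ‖((e.symm : (Fin m → ℂ) →L[ℂ] (Fin m → ℂ)))‖₊ = 1 := by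
    have hcoe : ((e.symm : (Fin m → ℂ) →L[ℂ] (Fin m → ℂ)))
        = ContinuousLinearMap.id ℂ (Fin m → ℂ) := rfl
    rw [hcoe]
    exact ContinuousLinearMap.nnnorm_id
  have hc : (1 / 2 : ℝ≥0) < ‖((e.symm : (Fin m → ℂ) →L[ℂ] (Fin m → ℂ)))‖₊⁻¹ := by
    rw [hesymm, inv_one]
    exact_mod_cast (by norm_num : (1 / 2 : ℝ) < 1)
  -- nonlinear right inverse of the identity
  set f'symm : (ContinuousLinearMap.id ℂ (Fin m → ℂ)).NonlinearRightInverse :=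
    { toFun := fun y => y
      nnnorm := 1
      bound' := fun y => by simp
      right_inv' := fun y => rfl } with hfsymmdef
  refine ⟨δ₀, hδ₀pos, ?_, ?_⟩
  · intro z hz w hw
    apply hR z (hεD hz)
    calc ‖w‖ < δ₀ := hw
      _ ≤ R' / 8 := hδ₀a
      _ < R := by linarith
  · intro U hU hUopen δ hδmem
    obtain ⟨hδpos, hδle⟩ := hδmem
    -- the surjectivity statement
    have hsurj : ∀ z ∈ U, ∀ w ∈ Metric.ball z (δ / 2),
        ∃ w' ∈ Metric.ball (0 : Fin m → ℂ) δ,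
          ((z, w') : (Fin m → ℂ) × (Fin m → ℂ)) ∈ Ω ∧ α (z, w') = w := by
      intro z hz w hw
      have hzε : z ∈ Wset m ε := hU hz
      have hwz : ‖w - z‖ < δ / 2 := by
        rw [← dist_eq_norm]; exact hw
      set ρ : ℝ := ‖w - z‖ + δ / 2 with hρdef
      have hρpos : 0 < ρ := by positivity
      have hρδ : ρ < δ := by rw [hρdef]; linarith
      have hρδ₀ : ρ < δ₀ := lt_of_lt_of_le hρδ hδle
      have happrox : ApproximatesLinearOn (fun w => α (z, w))
          (ContinuousLinearMap.id ℂ (Fin m → ℂ))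
          (Metric.closedBall (0 : Fin m → ℂ) ρ) (1 / 2) :=
        (hApprox z hzε).mono_set (Metric.closedBall_subset_ball hρδ₀)
      have hsurjon := happrox.surjOn_closedBall_of_nonlinearRightInverse f'symm
        hρpos.le (subset_refl _)
      have hwmem : w ∈ Metric.closedBall (α (z, (0 : Fin m → ℂ)))
          (((f'symm.nnnorm : ℝ)⁻¹ - (1 / 2 : ℝ≥0)) * ρ) := by
        rw [Metric.mem_closedBall, hα0 z (hWsub hzε), dist_eq_norm]
        have hcoe : ((f'symm.nnnorm : ℝ)⁻¹ - ((1 / 2 : ℝ≥0) : ℝ)) = 1 / 2 := by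
          rw [hfsymmdef]; norm_num
        rw [hcoe, hρdef]
        linarith
      obtain ⟨w', hw'mem, hw'eq⟩ := hsurjon hwmem
      have hw'ρ : ‖w'‖ ≤ ρ := by
        have h10 := Metric.mem_closedBall.mp hw'mem
        rwa [dist_zero_right] at h10
      refine ⟨w', ?_, ?_, hw'eq⟩
      · rw [Metric.mem_ball, dist_zero_right]
        exact lt_of_le_of_lt hw'ρ hρδ
      · apply hR z (hεD hzε)
        calc ‖w'‖ ≤ ρ := hw'ρ
          _ < δ₀ := hρδ₀
          _ ≤ R' / 8 := hδ₀a
          _ < R := by linarith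
    refine ⟨hsurj, ?_⟩
    -- the Lipschitz statement
    intro z hz w₁ hw₁ w₂ hw₂
    have hzε : z ∈ Wset m ε := hU hz
    obtain ⟨w₁', hw₁'ball, hw₁'Ω, hw₁'eq⟩ := hsurj z hz w₁ hw₁
    obtain ⟨w₂', hw₂'ball, hw₂'Ω, hw₂'eq⟩ := hsurj z hz w₂ hw₂
    have hψ₁ : (ψ (z, w₁)).2 = w₁' := by
      have := hψ (z, w₁') hw₁'Ω
      simp only at this
      rw [hw₁'eq] at this
      rw [this]
    have hψ₂ : (ψ (z, w₂)).2 = w₂' := by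
      have := hψ (z, w₂') hw₂'Ω
      simp only at this
      rw [hw₂'eq] at this
      rw [this]
    rw [hψ₁, hψ₂]
    -- antilipschitz estimate
    have happrox : ApproximatesLinearOn (fun w => α (z, w))
        ((e : (Fin m → ℂ) →L[ℂ] (Fin m → ℂ)))
        (Metric.ball (0 : Fin m → ℂ) δ₀) (1 / 2) := by
      rw [hecoe]; exact hApprox z hzε
    have hanti := happrox.antilipschitz (Or.inr hc)
    have hw₁'δ₀ : w₁' ∈ Metric.ball (0 : Fin m → ℂ) δ₀ := by
      rw [Metric.mem_ball] at hw₁'ball ⊢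
      exact lt_of_lt_of_le hw₁'ball hδle
    have hw₂'δ₀ : w₂' ∈ Metric.ball (0 : Fin m → ℂ) δ₀ := by
      rw [Metric.mem_ball] at hw₂'ball ⊢
      exact lt_of_lt_of_le hw₂'ball hδle
    have hKval : ((‖((e.symm : (Fin m → ℂ) →L[ℂ] (Fin m → ℂ)))‖₊⁻¹ - (1 / 2 : ℝ≥0))⁻¹ : ℝ≥0)
        = 2 := by
      have h12 : ((1 : ℝ≥0) - 1 / 2) = 1 / 2 := tsub_eq_of_eq_add (by apply NNReal.coe_injective; push_cast; norm_num)
      rw [hesymm, inv_one, h12, one_div, inv_inv]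
    have hdist := hanti.le_mul_dist ⟨w₁', hw₁'δ₀⟩ ⟨w₂', hw₂'δ₀⟩
    simp only [Set.restrict_apply] at hdist
    rw [hKval] at hdist
    have hrestrict : dist (⟨w₁', hw₁'δ₀⟩ : Metric.ball (0 : Fin m → ℂ) δ₀)
        ⟨w₂', hw₂'δ₀⟩ = ‖w₁' - w₂'‖ := by
      rw [Subtype.dist_eq, dist_eq_norm]
    rw [hrestrict] at hdist
    calc ‖w₁' - w₂'‖ ≤ 2 * dist (α (z, w₁')) (α (z, w₂')) := by
          exact_mod_cast hdist
      _ = 2 * ‖w₁ - w₂‖ := by rw [hw₁'eq, hw₂'eq, dist_eq_norm]
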